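/- The 9-tuple (1,1,1,1,1,1,1,1,1) is a λ-quiddity cycle over ℤ for some λ ∈ {±1}, the 8-tuple (0,1,1,1,1,1,1,0) is a quiddity cycle over ℕ (the nonnegative integers), and (1,1,1,1,1,1,1,1,1) = (1,1,1) ⊕ (0,1,1,1,1,1,1,0). In particular, (1,1,1,1,1,1,1,1,1) is reducible over ℕ, although by the irreducibility of all-ones cycles it is irreducible over ℕ_{>0}; hence reducibility of a quiddity cycle depends on the ambient set R. -/

import Mathlib

open Matrix

/-- The 2×2 matrix `[[x, -1], [1, 0]]` associated to an entry of a quiddity cycle. -/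
def qMat {R : Type*} [CommRing R] (x : R) : Matrix (Fin 2) (Fin 2) R := !![x, -1; 1, 0]

/-- `c` is a `lam`-quiddity cycle: the product `∏ [[cₜ,−1],[1,0]]` equals `lam • Id`. -/
def IsQC {R : Type*} [CommRing R] (lam : R) (c : List R) : Prop :=
  (c.map qMat).prod = lam • (1 : Matrix (Fin 2) (Fin 2) R)

/-- `a ⊕ b = (a₁+b_l, a₂, …, a_{k−1}, a_k+b₁, b₂, …, b_{l−1})`. -/
def oplus {R : Type*} [CommRing R] (a b : List R) : List R :=
  (a.head?.getD 0 + b.getLast?.getD 0) ::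
    ((a.drop 1).dropLast ++ (a.getLast?.getD 0 + b.head?.getD 0) :: (b.drop 1).dropLast)

/-- Dihedral equivalence: `a` is a cyclic rotation of `b` or of the reversal of `b`,
i.e. `a = b^σ` for some `σ` in the dihedral group acting on `n` points. -/
def DihEquiv {α : Type*} (a b : List α) : Prop :=
  ∃ i : ℕ, a = b.rotate i ∨ a = b.reverse.rotate i

/-- The action of a dihedral group element, encoded by a rotation amount and a reversal flag. -/
def applyDih {α : Type*} (p : ℕ × Bool) (c : List α) : List α :=
  if p.2 then c.reverse.rotate p.1 else c.rotate p.1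

/-- `c` (of length `> 2`) is reducible over the subset `S ⊆ ℤ` as a `lam`-quiddity cycle. -/
def ReducibleOn (S : Set ℤ) (lam : ℤ) (c : List ℤ) : Prop :=
  ∃ (lam' lam'' : ℤ) (a b : List ℤ),
    (lam' = 1 ∨ lam' = -1) ∧ (lam'' = 1 ∨ lam'' = -1) ∧
    (∀ x ∈ a, x ∈ S) ∧ (∀ x ∈ b, x ∈ S) ∧
    IsQC lam' a ∧ IsQC lam'' b ∧
    2 < a.length ∧ 2 < b.length ∧ c.length = a.length + b.length - 2 ∧
    lam = -(lam' * lam'') ∧ DihEquiv c (oplus a b)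


lemma q9 : IsQC (-1) ([1, 1, 1, 1, 1, 1, 1, 1, 1] : List ℤ) := by
  simp [IsQC, qMat]
  ext i j; fin_cases i <;> fin_cases j <;> simp

lemma q8 : IsQC (-1) ([0, 1, 1, 1, 1, 1, 1, 0] : List ℤ) := by
  simp [IsQC, qMat]
  ext i j; fin_cases i <;> fin_cases j <;> simp

lemma q3 : IsQC (-1) ([1, 1, 1] : List ℤ) := by
  simp [IsQC, qMat]
  ext i j; fin_cases i <;> fin_cases j <;> simp

/-- `(1,1,1,1,1,1,1,1,1)` is a `λ`-quiddity cycle over ℤ for some `λ ∈ {±1}`,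
`(0,1,1,1,1,1,1,0)` is a quiddity cycle over ℕ, and
`(1,1,1,1,1,1,1,1,1) = (1,1,1) ⊕ (0,1,1,1,1,1,1,0)`; hence the all-ones 9-tuple is
reducible over ℕ, though irreducible over `ℕ_{>0}`: reducibility depends on `R`. -/
theorem stmt11 :
    ∃ lam : ℤ, (lam = 1 ∨ lam = -1) ∧
      IsQC lam ([1, 1, 1, 1, 1, 1, 1, 1, 1] : List ℤ) ∧
      (∃ mu : ℤ, (mu = 1 ∨ mu = -1) ∧ IsQC mu ([0, 1, 1, 1, 1, 1, 1, 0] : List ℤ) ∧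
        (∀ x ∈ ([0, 1, 1, 1, 1, 1, 1, 0] : List ℤ), 0 ≤ x)) ∧
      ([1, 1, 1, 1, 1, 1, 1, 1, 1] : List ℤ) = oplus [1, 1, 1] [0, 1, 1, 1, 1, 1, 1, 0] ∧
      ReducibleOn {x : ℤ | 0 ≤ x} lam [1, 1, 1, 1, 1, 1, 1, 1, 1] ∧
      ¬ ReducibleOn {x : ℤ | 0 < x} lam [1, 1, 1, 1, 1, 1, 1, 1, 1] := by
  refine ⟨-1, Or.inr rfl, q9, ⟨-1, Or.inr rfl, q8, by decide⟩, by decide, ?_, ?_⟩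
  · exact ⟨-1, -1, [1,1,1], [0,1,1,1,1,1,1,0], Or.inr rfl, Or.inr rfl,
      by decide, by decide, q3, q8, by decide, by decide, by decide, by decide,
      0, Or.inl (by decide)⟩
  · rintro ⟨l', l'', a, b, -, -, hApos, hBpos, -, -, hla, hlb, -, -, i, hd⟩
    have hmem : (a.head?.getD 0 + b.getLast?.getD 0) ∈ oplus a b := List.mem_cons_self
    have h1 : (a.head?.getD 0 + b.getLast?.getD 0) = 1 := by
      rcases hd with hd | hd
      · have := (List.mem_rotate (n := i)).2 hmem
        rw [← hd] at this; simpa using this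
      · have := (List.mem_rotate (n := i)).2 (List.mem_reverse.2 hmem)
        rw [← hd] at this; simpa using this
    have hane : a ≠ [] := by rintro rfl; simp at hla
    have hbne : b ≠ [] := by rintro rfl; simp at hlb
    have ha1 : 0 < a.head?.getD 0 := by
      rw [List.head?_eq_head hane]
      exact hApos _ (List.head_mem hane)
    have hb1 : 0 < b.getLast?.getD 0 := by
      rw [List.getLast?_eq_getLast hbne]
      exact hBpos _ (List.getLast_mem hbne)
    omega
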